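/- Let T = {C₁ ⊑ D₁, …, Cₙ ⊑ Dₙ} be a terminology, R a set of role inclusion axioms, and C, D SHIQ-concepts. Let C_T be the conjunction of the concepts ¬Cᵢ ⊔ Dᵢ over all axioms of T, let U be a transitive role name not occurring in T, C, D, or R, and let R_U = R ∪ {R ⊑ U, Inv(R) ⊑ U : R occurs in T, C, D, or R}. Then D subsumes C with respect to T and R⁺ if and only if C ⊓ ¬D ⊓ C_T ⊓ ∀U.C_T is unsatisfiable with respect to R_U⁺. -/

import Mathlib

/-- SHIQ-roles: role names (indexed by ℕ) and their inverses. -/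
inductive Role where
  | atom : ℕ → Role
  | inv  : ℕ → Role
deriving DecidableEq

/-- The function `Inv` on roles: `Inv(R) = R⁻`, `Inv(R⁻) = R`. -/
def Role.Inv : Role → Role
  | .atom r => .inv r
  | .inv r  => .atom r

/-- The underlying role name of a (possibly inverse) role. -/
def Role.name : Role → ℕ
  | .atom r => r
  | .inv r  => r

/-- Concepts of the SHIQ family (with ⊤ and ⊥ for convenience). -/
inductive DLConcept where
  | top : DLConcept
  | bot : DLConcept
  | atom : ℕ → DLConcept
  | neg : DLConcept → DLConcept
  | and : DLConcept → DLConcept → DLConcept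
  | or : DLConcept → DLConcept → DLConcept
  | all : Role → DLConcept → DLConcept
  | ex : Role → DLConcept → DLConcept
  | atleast : ℕ → Role → DLConcept → DLConcept
  | atmost : ℕ → Role → DLConcept → DLConcept
deriving DecidableEq

/-- An interpretation: a (nonempty) domain, a valuation of concept names and
    of role names. -/
structure Interp where
  Dom : Type
  dom_nonempty : Nonempty Dom
  cI : ℕ → Set Dom
  rI : ℕ → Dom → Dom → Prop

/-- Semantics of (possibly inverse) roles. -/
def Interp.rSem (I : Interp) : Role → I.Dom → I.Dom → Prop
  | .atom r => I.rI r
  | .inv r  => fun x y => I.rI r y x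

/-- Semantics of concepts; number restrictions are interpreted by counting
    role successors (via cardinalities, so that infinite sets are handled
    correctly). -/
def Interp.cSem (I : Interp) : DLConcept → Set I.Dom
  | .top => Set.univ
  | .bot => ∅
  | .atom a => I.cI a
  | .neg C => (I.cSem C)ᶜ
  | .and C D => I.cSem C ∩ I.cSem D
  | .or C D => I.cSem C ∪ I.cSem D
  | .all R C => {x | ∀ y, I.rSem R x y → y ∈ I.cSem C}
  | .ex R C => {x | ∃ y, I.rSem R x y ∧ y ∈ I.cSem C}
  | .atleast n R C => {x | (n : Cardinal) ≤ Cardinal.mk {y // I.rSem R x y ∧ y ∈ I.cSem C}}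
  | .atmost n R C => {x | Cardinal.mk {y // I.rSem R x y ∧ y ∈ I.cSem C} ≤ (n : Cardinal)}

/-- `I.Good Rp`: the interpretation interprets every transitive role name
    (member of `Rp`) by a transitive relation. -/
def Interp.Good (I : Interp) (Rp : Set ℕ) : Prop :=
  ∀ r ∈ Rp, Transitive (I.rI r)

/-- The role hierarchy ⊑* generated by a finite set of role inclusion axioms:
    inverses are added and the transitive-reflexive closure is taken. -/
def SubRole (RIA : List (Role × Role)) : Role → Role → Prop :=
  Relation.ReflTransGen (fun R S => (R, S) ∈ RIA ∨ (R.Inv, S.Inv) ∈ RIA)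

/-- `I ⊨ R⁺`: the interpretation satisfies the role hierarchy. -/
def Interp.ModelsRH (I : Interp) (RIA : List (Role × Role)) : Prop :=
  ∀ R S, SubRole RIA R S → ∀ x y, I.rSem R x y → I.rSem S x y

/-- `Trans(R)`: a (possibly inverse) role is transitive iff its name is in `Rp`. -/
def RTrans (Rp : Set ℕ) : Role → Prop
  | .atom r => r ∈ Rp
  | .inv r  => r ∈ Rp

/-- A role is simple iff it is neither transitive nor has a transitive sub-role. -/
def SimpleRole (Rp : Set ℕ) (RIA : List (Role × Role)) (R : Role) : Prop :=
  ∀ S, SubRole RIA S R → ¬ RTrans Rp S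

/-- SHIQ-concepts: number restrictions occur only on simple roles. -/
def DLConcept.IsSHIQ (Rp : Set ℕ) (RIA : List (Role × Role)) : DLConcept → Prop
  | .top | .bot | .atom _ => True
  | .neg C => C.IsSHIQ Rp RIA
  | .and C D | .or C D => C.IsSHIQ Rp RIA ∧ D.IsSHIQ Rp RIA
  | .all _ C | .ex _ C => C.IsSHIQ Rp RIA
  | .atleast _ R C | .atmost _ R C => SimpleRole Rp RIA R ∧ C.IsSHIQ Rp RIA

/-- Satisfiability of a concept w.r.t. a role hierarchy. -/
def Satisfiable (Rp : Set ℕ) (RIA : List (Role × Role)) (C : DLConcept) : Prop :=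
  ∃ I : Interp, I.Good Rp ∧ I.ModelsRH RIA ∧ (I.cSem C).Nonempty

/-- Subsumption of concepts w.r.t. a role hierarchy. -/
def Subsumes (Rp : Set ℕ) (RIA : List (Role × Role)) (C D : DLConcept) : Prop :=
  ∀ I : Interp, I.Good Rp → I.ModelsRH RIA → I.cSem C ⊆ I.cSem D
/-- A terminology: a finite list of general concept inclusion axioms `C ⊑ D`. -/
abbrev Terminology := List (DLConcept × DLConcept)

/-- `I` is a model of the terminology `T`. -/
def Interp.ModelsT (I : Interp) (T : Terminology) : Prop :=
  ∀ p ∈ T, I.cSem p.1 ⊆ I.cSem p.2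

/-- Satisfiability w.r.t. a terminology and a role hierarchy. -/
def SatisfiableT (Rp : Set ℕ) (RIA : List (Role × Role)) (T : Terminology)
    (C : DLConcept) : Prop :=
  ∃ I : Interp, I.Good Rp ∧ I.ModelsRH RIA ∧ I.ModelsT T ∧ (I.cSem C).Nonempty

/-- Subsumption w.r.t. a terminology and a role hierarchy. -/
def SubsumesT (Rp : Set ℕ) (RIA : List (Role × Role)) (T : Terminology)
    (C D : DLConcept) : Prop :=
  ∀ I : Interp, I.Good Rp → I.ModelsRH RIA → I.ModelsT T → I.cSem C ⊆ I.cSem D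

/-- `C_T`: the conjunction of all `¬Cᵢ ⊔ Dᵢ` for `Cᵢ ⊑ Dᵢ ∈ T`. -/
def CT (T : Terminology) : DLConcept :=
  T.foldr (fun p acc => DLConcept.and (DLConcept.or (DLConcept.neg p.1) p.2) acc) DLConcept.top

/-- The role names occurring in a concept. -/
def DLConcept.roleNames : DLConcept → Finset ℕ
  | .top | .bot | .atom _ => ∅
  | .neg C => C.roleNames
  | .and C D | .or C D => C.roleNames ∪ D.roleNames
  | .all R C | .ex R C => insert R.name C.roleNames
  | .atleast _ R C | .atmost _ R C => insert R.name C.roleNames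

/-- The role names occurring in a terminology. -/
def termRoleNames (T : Terminology) : Finset ℕ :=
  T.foldr (fun p acc => p.1.roleNames ∪ p.2.roleNames ∪ acc) ∅

/-- The role names occurring in a set of role inclusion axioms. -/
def riaRoleNames (RIA : List (Role × Role)) : Finset ℕ :=
  RIA.foldr (fun p acc => insert p.1.name (insert p.2.name acc)) ∅

/-- `R_U`: the given role inclusion axioms extended with `R ⊑ U` and
    `Inv(R) ⊑ U` for every role (name) `r` in `names`. -/
def addU (RIA : List (Role × Role)) (names : Finset ℕ) (u : ℕ) : List (Role × Role) :=
  RIA ++ (names.sort (· ≤ ·)).map (fun r => (Role.atom r, Role.atom u))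
      ++ (names.sort (· ≤ ·)).map (fun r => (Role.inv r, Role.atom u))

section Aux

lemma Role.name_Inv (R : Role) : R.Inv.name = R.name := by cases R <;> rfl

lemma mem_riaRoleNames {RIA : List (Role × Role)} {R S : Role} (h : (R, S) ∈ RIA) :
    R.name ∈ riaRoleNames RIA ∧ S.name ∈ riaRoleNames RIA := by
  induction RIA with
  | nil => simp at h
  | cons p l ih =>
    have : riaRoleNames (p :: l) = insert p.1.name (insert p.2.name (riaRoleNames l)) := rfl
    rw [this]
    rcases List.mem_cons.mp h with h | h
    · rw [← h]; exact ⟨Finset.mem_insert_self _ _,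
        Finset.mem_insert_of_mem (Finset.mem_insert_self _ _)⟩
    · rcases ih h with ⟨h1, h2⟩
      exact ⟨Finset.mem_insert_of_mem (Finset.mem_insert_of_mem h1),
        Finset.mem_insert_of_mem (Finset.mem_insert_of_mem h2)⟩

lemma mem_termRoleNames {T : Terminology} {p : DLConcept × DLConcept} (h : p ∈ T) :
    p.1.roleNames ⊆ termRoleNames T ∧ p.2.roleNames ⊆ termRoleNames T := by
  induction T with
  | nil => simp at h
  | cons q l ih =>
    have e : termRoleNames (q :: l) = q.1.roleNames ∪ q.2.roleNames ∪ termRoleNames l := rfl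
    rw [e]
    rcases List.mem_cons.mp h with h | h
    · rw [h]
      exact ⟨(Finset.subset_union_left).trans Finset.subset_union_left,
        (Finset.subset_union_right).trans Finset.subset_union_left⟩
    · rcases ih h with ⟨h1, h2⟩
      exact ⟨h1.trans Finset.subset_union_right, h2.trans Finset.subset_union_right⟩

lemma roleNames_CT (T : Terminology) : (CT T).roleNames ⊆ termRoleNames T := by
  induction T with
  | nil => simp [CT, DLConcept.roleNames]
  | cons p l ih =>
    have e1 : CT (p :: l) =
        DLConcept.and (DLConcept.or (DLConcept.neg p.1) p.2) (CT l) := rfl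
    have e2 : termRoleNames (p :: l) = p.1.roleNames ∪ p.2.roleNames ∪ termRoleNames l := rfl
    rw [e1, e2]
    have : (DLConcept.and (DLConcept.or (DLConcept.neg p.1) p.2) (CT l)).roleNames =
        (p.1.roleNames ∪ p.2.roleNames) ∪ (CT l).roleNames := rfl
    rw [this]
    exact Finset.union_subset_union (le_refl _) ih

lemma mem_cSem_CT {I : Interp} {T : Terminology} {y : I.Dom} :
    y ∈ I.cSem (CT T) ↔ ∀ p ∈ T, y ∈ I.cSem p.1 → y ∈ I.cSem p.2 := by
  induction T with
  | nil => simp [CT, Interp.cSem]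
  | cons p l ih =>
    have e1 : CT (p :: l) =
        DLConcept.and (DLConcept.or (DLConcept.neg p.1) p.2) (CT l) := rfl
    rw [e1]
    have e2 : y ∈ I.cSem (DLConcept.and (DLConcept.or (DLConcept.neg p.1) p.2) (CT l)) ↔
        ((y ∉ I.cSem p.1 ∨ y ∈ I.cSem p.2) ∧ y ∈ I.cSem (CT l)) := Iff.rfl
    rw [e2, ih]
    constructor
    · rintro ⟨h1, h2⟩ q hq
      rcases List.mem_cons.mp hq with hq | hq
      · rw [hq]; intro hy; rcases h1 with h | h
        · exact absurd hy h
        · exact h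
      · exact h2 q hq
    · intro h
      refine ⟨?_, fun q hq => h q (List.mem_cons_of_mem _ hq)⟩
      by_cases hy : y ∈ I.cSem p.1
      · exact Or.inr (h p List.mem_cons_self hy)
      · exact Or.inl hy

lemma mem_addU_of_mem {RIA : List (Role × Role)} {names : Finset ℕ} {u : ℕ}
    {p : Role × Role} (h : p ∈ RIA) : p ∈ addU RIA names u := by
  simp [addU, h]

lemma atomU_mem_addU {RIA : List (Role × Role)} {names : Finset ℕ} {u r : ℕ}
    (h : r ∈ names) : (Role.atom r, Role.atom u) ∈ addU RIA names u := by
  simp only [addU, List.mem_append, List.mem_map]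
  exact Or.inl (Or.inr ⟨r, (Finset.mem_sort _).mpr h, rfl⟩)

lemma invU_mem_addU {RIA : List (Role × Role)} {names : Finset ℕ} {u r : ℕ}
    (h : r ∈ names) : (Role.inv r, Role.atom u) ∈ addU RIA names u := by
  simp only [addU, List.mem_append, List.mem_map]
  exact Or.inr ⟨r, (Finset.mem_sort _).mpr h, rfl⟩

lemma subRole_mono {RIA : List (Role × Role)} {names : Finset ℕ} {u : ℕ} {R S : Role}
    (h : SubRole RIA R S) : SubRole (addU RIA names u) R S :=
  Relation.ReflTransGen.mono (r := fun R S => (R, S) ∈ RIA ∨ (R.Inv, S.Inv) ∈ RIA)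
    (p := fun R S => (R, S) ∈ addU RIA names u ∨ (R.Inv, S.Inv) ∈ addU RIA names u)
    (fun _ _ hab => hab.imp mem_addU_of_mem mem_addU_of_mem) _ _ h

/-- Restriction of an interpretation to a subset of the domain. -/
def Interp.restrict (I : Interp) (S : Set I.Dom) (hne : S.Nonempty) : Interp where
  Dom := ↥S
  dom_nonempty := hne.to_subtype
  cI n := {y | y.val ∈ I.cI n}
  rI r y z := I.rI r y.val z.val

lemma restrict_rSem (I : Interp) (S : Set I.Dom) (hne : S.Nonempty) (R : Role)
    (y z : ↥S) :
    (I.restrict S hne).rSem R y z ↔ I.rSem R y.val z.val := by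
  cases R <;> rfl

lemma restrict_cSem (I : Interp) (S : Set I.Dom) (hne : S.Nonempty)
    (names : Finset ℕ)
    (hcl : ∀ r ∈ names, ∀ y ∈ S, ∀ z, (I.rI r y z ∨ I.rI r z y) → z ∈ S) :
    ∀ (E : DLConcept), E.roleNames ⊆ names →
      ∀ y : ↥S, (y ∈ (I.restrict S hne).cSem E ↔ y.val ∈ I.cSem E) := by
  have hclR : ∀ (R : Role), R.name ∈ names → ∀ y : ↥S, ∀ z, I.rSem R y.val z → z ∈ S := by
    intro R hR y z hz
    cases R with
    | atom r => exact hcl r hR y.val y.property z (Or.inl hz)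
    | inv r => exact hcl r hR y.val y.property z (Or.inr hz)
  intro E
  induction E with
  | top => intro _ y; simp [Interp.cSem]; trivial
  | bot => intro _ y; simp [Interp.cSem]; exact fun h => h
  | atom a => intro _ y; exact Iff.rfl
  | neg C ih => intro h y; exact not_congr (ih h y)
  | and C D ihC ihD =>
    intro h y
    have hC := ihC ((Finset.subset_union_left).trans h) y
    have hD := ihD ((Finset.subset_union_right).trans h) y
    exact and_congr hC hD
  | or C D ihC ihD =>
    intro h y
    have hC := ihC ((Finset.subset_union_left).trans h) y
    have hD := ihD ((Finset.subset_union_right).trans h) y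
    exact or_congr hC hD
  | all R C ih =>
    intro h y
    have hRn : R.name ∈ names := h (Finset.mem_insert_self _ _)
    have hCsub : C.roleNames ⊆ names := (Finset.subset_insert _ _).trans h
    constructor
    · intro hy z hz
      have hzS : z ∈ S := hclR R hRn y z hz
      have := hy ⟨z, hzS⟩ ((restrict_rSem I S hne R y ⟨z, hzS⟩).mpr hz)
      exact (ih hCsub ⟨z, hzS⟩).mp this
    · intro hy z hz
      have hz' := (restrict_rSem I S hne R y z).mp hz
      exact (ih hCsub z).mpr (hy z.val hz')
  | ex R C ih =>
    intro h y
    have hRn : R.name ∈ names := h (Finset.mem_insert_self _ _)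
    have hCsub : C.roleNames ⊆ names := (Finset.subset_insert _ _).trans h
    constructor
    · rintro ⟨z, hz1, hz2⟩
      exact ⟨z.val, (restrict_rSem I S hne R y z).mp hz1, (ih hCsub z).mp hz2⟩
    · rintro ⟨z, hz1, hz2⟩
      have hzS : z ∈ S := hclR R hRn y z hz1
      exact ⟨⟨z, hzS⟩, (restrict_rSem I S hne R y ⟨z, hzS⟩).mpr hz1,
        (ih hCsub ⟨z, hzS⟩).mpr hz2⟩
  | atleast n R C ih =>
    intro h y
    have hRn : R.name ∈ names := h (Finset.mem_insert_self _ _)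
    have hCsub : C.roleNames ⊆ names := (Finset.subset_insert _ _).trans h
    have e : {z : ↥S // (I.restrict S hne).rSem R y z ∧ z ∈ (I.restrict S hne).cSem C} ≃
        {z : I.Dom // I.rSem R y.val z ∧ z ∈ I.cSem C} :=
      { toFun := fun z => ⟨z.val.val, (restrict_rSem I S hne R y z.val).mp z.prop.1,
          (ih hCsub z.val).mp z.prop.2⟩
        invFun := fun w => ⟨⟨w.val, hclR R hRn y w.val w.prop.1⟩,
          (restrict_rSem I S hne R y _).mpr w.prop.1,
          (ih hCsub ⟨w.val, hclR R hRn y w.val w.prop.1⟩).mpr w.prop.2⟩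
        left_inv := fun z => rfl
        right_inv := fun w => rfl }
    have hc : Cardinal.mk {z : ↥S // (I.restrict S hne).rSem R y z ∧
        z ∈ (I.restrict S hne).cSem C} =
        Cardinal.mk {z : I.Dom // I.rSem R y.val z ∧ z ∈ I.cSem C} := Cardinal.mk_congr e
    show (n : Cardinal) ≤ Cardinal.mk {z : ↥S // (I.restrict S hne).rSem R y z ∧
        z ∈ (I.restrict S hne).cSem C} ↔
      (n : Cardinal) ≤ Cardinal.mk {z : I.Dom // I.rSem R y.val z ∧ z ∈ I.cSem C}
    rw [hc]
  | atmost n R C ih =>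
    intro h y
    have hRn : R.name ∈ names := h (Finset.mem_insert_self _ _)
    have hCsub : C.roleNames ⊆ names := (Finset.subset_insert _ _).trans h
    have e : {z : ↥S // (I.restrict S hne).rSem R y z ∧ z ∈ (I.restrict S hne).cSem C} ≃
        {z : I.Dom // I.rSem R y.val z ∧ z ∈ I.cSem C} :=
      { toFun := fun z => ⟨z.val.val, (restrict_rSem I S hne R y z.val).mp z.prop.1,
          (ih hCsub z.val).mp z.prop.2⟩
        invFun := fun w => ⟨⟨w.val, hclR R hRn y w.val w.prop.1⟩,
          (restrict_rSem I S hne R y _).mpr w.prop.1,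
          (ih hCsub ⟨w.val, hclR R hRn y w.val w.prop.1⟩).mpr w.prop.2⟩
        left_inv := fun z => rfl
        right_inv := fun w => rfl }
    have hc : Cardinal.mk {z : ↥S // (I.restrict S hne).rSem R y z ∧
        z ∈ (I.restrict S hne).cSem C} =
        Cardinal.mk {z : I.Dom // I.rSem R y.val z ∧ z ∈ I.cSem C} := Cardinal.mk_congr e
    show Cardinal.mk {z : ↥S // (I.restrict S hne).rSem R y z ∧
        z ∈ (I.restrict S hne).cSem C} ≤ (n : Cardinal) ↔
      Cardinal.mk {z : I.Dom // I.rSem R y.val z ∧ z ∈ I.cSem C} ≤ (n : Cardinal)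
    rw [hc]

lemma cSem_agree (Dm : Type) (hne : Nonempty Dm) (cI : ℕ → Set Dm)
    (r1 r2 : ℕ → Dm → Dm → Prop) :
    ∀ (E : DLConcept), (∀ n ∈ E.roleNames, r1 n = r2 n) →
      (Interp.mk Dm hne cI r1).cSem E = (Interp.mk Dm hne cI r2).cSem E := by
  have hr : ∀ (R : Role), r1 R.name = r2 R.name →
      (Interp.mk Dm hne cI r1).rSem R = (Interp.mk Dm hne cI r2).rSem R := by
    intro R h
    cases R with
    | atom r => simpa [Interp.rSem, Role.name] using h
    | inv r =>
      show (fun x y => r1 r y x) = (fun x y => r2 r y x)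
      rw [show (r1 r = r2 r) from h]
  intro E
  induction E with
  | top => intro _; rfl
  | bot => intro _; rfl
  | atom a => intro _; rfl
  | neg C ih => intro h; show _ᶜ = _ᶜ; rw [ih h]
  | and C D ihC ihD =>
    intro h
    show _ ∩ _ = _ ∩ _
    rw [ihC (fun n hn => h n (Finset.mem_union_left _ hn)),
      ihD (fun n hn => h n (Finset.mem_union_right _ hn))]
  | or C D ihC ihD =>
    intro h
    show _ ∪ _ = _ ∪ _
    rw [ihC (fun n hn => h n (Finset.mem_union_left _ hn)),
      ihD (fun n hn => h n (Finset.mem_union_right _ hn))]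
  | all R C ih =>
    intro h
    show {x | ∀ y, _} = {x | ∀ y, _}
    rw [ih (fun n hn => h n (Finset.mem_insert_of_mem hn)),
      hr R (h R.name (Finset.mem_insert_self _ _))]
  | ex R C ih =>
    intro h
    show {x | ∃ y, _} = {x | ∃ y, _}
    rw [ih (fun n hn => h n (Finset.mem_insert_of_mem hn)),
      hr R (h R.name (Finset.mem_insert_self _ _))]
  | atleast n R C ih =>
    intro h
    show {x | _ ≤ Cardinal.mk _} = {x | _ ≤ Cardinal.mk _}
    rw [ih (fun n hn => h n (Finset.mem_insert_of_mem hn)),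
      hr R (h R.name (Finset.mem_insert_self _ _))]
  | atmost n R C ih =>
    intro h
    show {x | Cardinal.mk _ ≤ _} = {x | Cardinal.mk _ ≤ _}
    rw [ih (fun n hn => h n (Finset.mem_insert_of_mem hn)),
      hr R (h R.name (Finset.mem_insert_self _ _))]

end Aux

/-- **Internalisation, subsumption.** With `C_T` and the fresh transitive
role name `U = u` as in the internalisation lemma, `D` subsumes `C` w.r.t. `T` and `R⁺`
iff `C ⊓ ¬D ⊓ C_T ⊓ ∀U.C_T` is unsatisfiable w.r.t. `R_U⁺`. -/
theorem internalisation_subs (Rp : Set ℕ) (RIA : List (Role × Role)) (T : Terminology)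
    (C D : DLConcept) (hC : C.IsSHIQ Rp RIA) (hD : D.IsSHIQ Rp RIA)
    (hT : ∀ p ∈ T, p.1.IsSHIQ Rp RIA ∧ p.2.IsSHIQ Rp RIA)
    (u : ℕ) (hu : u ∈ Rp)
    (hfresh : u ∉ C.roleNames ∪ D.roleNames ∪ termRoleNames T ∪ riaRoleNames RIA) :
    SubsumesT Rp RIA T C D ↔
      ¬ Satisfiable Rp
          (addU RIA (C.roleNames ∪ D.roleNames ∪ termRoleNames T ∪ riaRoleNames RIA) u)
          (DLConcept.and (DLConcept.and (DLConcept.and C (DLConcept.neg D)) (CT T))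
            (DLConcept.all (Role.atom u) (CT T))) := by
  set names : Finset ℕ :=
      C.roleNames ∪ D.roleNames ∪ termRoleNames T ∪ riaRoleNames RIA with hnames
  have hCsub : C.roleNames ⊆ names :=
    (Finset.subset_union_left.trans Finset.subset_union_left).trans Finset.subset_union_left
  have hDsub : D.roleNames ⊆ names :=
    (Finset.subset_union_right.trans Finset.subset_union_left).trans Finset.subset_union_left
  have hTsub : termRoleNames T ⊆ names :=
    Finset.subset_union_right.trans Finset.subset_union_left
  have hRsub : riaRoleNames RIA ⊆ names := Finset.subset_union_right
  constructor
  · -- subsumption → unsatisfiable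
    rintro hsub ⟨I, hgood, hrh, x, hx⟩
    simp only [Interp.cSem, Set.mem_inter_iff] at hx
    obtain ⟨⟨⟨hxC, hxnD⟩, hxCT⟩, hxall⟩ := hx
    -- the set of elements reachable from x
    set S : Set I.Dom := insert x {y | I.rI u x y} with hS
    have hxS : x ∈ S := Set.mem_insert _ _
    have hneS : S.Nonempty := ⟨x, hxS⟩
    have hcl : ∀ r ∈ names, ∀ y ∈ S, ∀ z, (I.rI r y z ∨ I.rI r z y) → z ∈ S := by
      intro r hr y hy z hz
      have huz : I.rI u y z := by
        rcases hz with hz | hz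
        · exact hrh _ _ (Relation.ReflTransGen.single (Or.inl (atomU_mem_addU hr))) y z hz
        · exact hrh _ _ (Relation.ReflTransGen.single (Or.inl (invU_mem_addU hr))) y z hz
      rcases hy with hy | hy
      · exact Or.inr (by rw [← hy]; exact huz)
      · exact Or.inr (hgood u hu hy huz)
    set J : Interp := I.restrict S hneS with hJ
    have hJgood : J.Good Rp := by
      intro r hr a b c hab hbc
      exact hgood r hr hab hbc
    have hJrh : J.ModelsRH RIA := by
      intro R S' hRS a b hab
      have := hrh R S' (subRole_mono hRS) a.val b.val
        ((restrict_rSem I S hneS R a b).mp hab)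
      exact (restrict_rSem I S hneS S' a b).mpr this
    have hCTmem : ∀ y : ↥S, y.val ∈ I.cSem (CT T) := by
      intro y
      rcases y.property with hy | hy
      · rw [hy]; exact hxCT
      · exact hxall y.val hy
    have hJT : J.ModelsT T := by
      intro p hp y hy
      have h1 : p.1.roleNames ⊆ names := (mem_termRoleNames hp).1.trans hTsub
      have h2 : p.2.roleNames ⊆ names := (mem_termRoleNames hp).2.trans hTsub
      have hy1 : y.val ∈ I.cSem p.1 := (restrict_cSem I S hneS names hcl p.1 h1 y).mp hy
      have hy2 : y.val ∈ I.cSem p.2 := mem_cSem_CT.mp (hCTmem y) p hp hy1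
      exact (restrict_cSem I S hneS names hcl p.2 h2 y).mpr hy2
    have hxJC : (⟨x, hxS⟩ : ↥S) ∈ J.cSem C :=
      (restrict_cSem I S hneS names hcl C hCsub ⟨x, hxS⟩).mpr hxC
    have hxJD : (⟨x, hxS⟩ : ↥S) ∈ J.cSem D := hsub J hJgood hJrh hJT hxJC
    exact hxnD ((restrict_cSem I S hneS names hcl D hDsub ⟨x, hxS⟩).mp hxJD)
  · -- unsatisfiable → subsumption
    intro hunsat I hgood hrh hmT x hxC
    by_contra hxD
    apply hunsat
    refine ⟨⟨I.Dom, I.dom_nonempty, I.cI,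
      fun r => if r = u then fun _ _ => True else I.rI r⟩, ?_, ?_, ⟨x, ?_⟩⟩
    case _ =>
      intro r hr
      by_cases h : r = u
      · subst h; simp only [if_pos rfl]; exact fun _ _ _ _ _ => trivial
      · simp only [if_neg h]; exact hgood r hr
    case _ =>
      set J : Interp := ⟨I.Dom, I.dom_nonempty, I.cI,
        fun r => if r = u then fun _ _ => True else I.rI r⟩ with hJdef
      have hname_u : ∀ (R : Role) (a b : J.Dom), R.name = u → J.rSem R a b := by
        intro R a b h
        cases R with
        | atom r =>
          show (if r = u then fun _ _ => True else I.rI r) a b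
          rw [if_pos (show r = u from h)]; trivial
        | inv r =>
          show (if r = u then fun _ _ => True else I.rI r) b a
          rw [if_pos (show r = u from h)]; trivial
      have hname_ne : ∀ (R : Role), R.name ≠ u →
          ∀ a b, (J.rSem R a b ↔ I.rSem R a b) := by
        intro R h a b
        cases R with
        | atom r =>
          show (if r = u then fun _ _ => True else I.rI r) a b ↔ I.rI r a b
          rw [if_neg (show ¬ r = u from h)]
        | inv r =>
          show (if r = u then fun _ _ => True else I.rI r) b a ↔ I.rI r b a
          rw [if_neg (show ¬ r = u from h)]
      intro R S hRS a b hab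
      induction hRS with
      | refl => exact hab
      | @tail b' S' hRb' hstep ih =>
        have hb' := ih
        -- analyse the single step b' ⟶ S'
        have hcases : ((b', S') ∈ RIA ∨ (b'.Inv, S'.Inv) ∈ RIA) ∨ S'.name = u := by
          rcases hstep with h | h
          · simp only [addU, List.mem_append, List.mem_map] at h
            rcases h with (h | ⟨r, _, hr⟩) | ⟨r, _, hr⟩
            · exact Or.inl (Or.inl h)
            · have : S' = Role.atom u := (Prod.ext_iff.mp hr).2.symm
              exact Or.inr (by rw [this]; rfl)
            · have : S' = Role.atom u := (Prod.ext_iff.mp hr).2.symm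
              exact Or.inr (by rw [this]; rfl)
          · simp only [addU, List.mem_append, List.mem_map] at h
            rcases h with (h | ⟨r, _, hr⟩) | ⟨r, _, hr⟩
            · exact Or.inl (Or.inr h)
            · have : S'.Inv = Role.atom u := (Prod.ext_iff.mp hr).2.symm
              have := congrArg Role.name this
              rw [Role.name_Inv] at this
              exact Or.inr this
            · have : S'.Inv = Role.atom u := (Prod.ext_iff.mp hr).2.symm
              have := congrArg Role.name this
              rw [Role.name_Inv] at this
              exact Or.inr this
        rcases hcases with h | h
        · -- a genuine RIA step: all names are ≠ u
          have hbn : b'.name ∈ riaRoleNames RIA ∧ S'.name ∈ riaRoleNames RIA := by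
            rcases h with h | h
            · exact mem_riaRoleNames h
            · have := mem_riaRoleNames h
              rwa [Role.name_Inv, Role.name_Inv] at this
          have hb'ne : b'.name ≠ u := fun he => hfresh (he ▸ hRsub hbn.1)
          have hS'ne : S'.name ≠ u := fun he => hfresh (he ▸ hRsub hbn.2)
          have hIb : I.rSem b' a b := (hname_ne b' hb'ne a b).mp hb'
          have hIS : I.rSem S' a b :=
            hrh b' S' (Relation.ReflTransGen.single h) a b hIb
          exact (hname_ne S' hS'ne a b).mpr hIS
        · exact hname_u S' a b h
    case _ =>
      set J : Interp := ⟨I.Dom, I.dom_nonempty, I.cI,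
        fun r => if r = u then fun _ _ => True else I.rI r⟩ with hJdef
      have hagree : ∀ (E : DLConcept), u ∉ E.roleNames → J.cSem E = I.cSem E := by
        intro E hE
        have h1 : ∀ n ∈ E.roleNames,
            (fun r => if r = u then (fun (_ _ : I.Dom) => True) else I.rI r) n = I.rI n := by
          intro n hn
          have : n ≠ u := fun he => hE (he ▸ hn)
          simp [this]
        have := cSem_agree I.Dom I.dom_nonempty I.cI
          (fun r => if r = u then fun _ _ => True else I.rI r) I.rI E h1
        exact this
      have huC : u ∉ C.roleNames := fun h => hfresh (hCsub h)
      have huD : u ∉ D.roleNames := fun h => hfresh (hDsub h)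
      have huT : u ∉ (CT T).roleNames := fun h => hfresh (hTsub (roleNames_CT T h))
      have hxCT : ∀ y : I.Dom, y ∈ I.cSem (CT T) :=
        fun y => mem_cSem_CT.mpr (fun p hp h1 => hmT p hp h1)
      simp only [Interp.cSem, Set.mem_inter_iff]
      refine ⟨⟨⟨?_, ?_⟩, ?_⟩, ?_⟩
      · show x ∈ J.cSem C; rw [hagree C huC]; exact hxC
      · show x ∉ J.cSem D
        rw [hagree D huD]; exact hxD
      · show x ∈ J.cSem (CT T)
        rw [hagree (CT T) huT]; exact hxCT x
      · show x ∈ J.cSem (DLConcept.all (Role.atom u) (CT T))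
        intro y _
        show y ∈ J.cSem (CT T)
        rw [hagree (CT T) huT]; exact hxCT y
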